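/- arXiv:1911.02841 — 4 statements merged into one kernel-verified Lean document; each statement's English description precedes it below -/
import Mathlib

section
/- Let 0<q<1, α>-1, t∈ℂ, and x a nonzero real number. Then applying the generalized q-differential operator ∂_{q,α} to the function u ↦ sin_α((1-q)ut;q²) at the point x gives ∂_{q,α}[sin_α((1-q)·t;q²)](x) = t·cos_α((1-q)xt;q²). -/
noncomputable section

open Complex Filter Topology

/-- Finite q-Pochhammer symbol (a;q)ₖ over ℂ. -/
def qPoch (a q : ℂ) (k : ℕ) : ℂ := ∏ j ∈ Finset.range k, (1 - a * q ^ j)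

/-- Finite q-Pochhammer symbol (a;q)ₖ over ℝ. -/
def qPochR (a q : ℝ) (k : ℕ) : ℝ := ∏ j ∈ Finset.range k, (1 - a * q ^ j)

/-- Infinite q-Pochhammer symbol (a;q)_∞ over ℝ. -/
def qPochInf (a q : ℝ) : ℝ := ∏' k : ℕ, (1 - a * q ^ k)

/-- k-th term of the generalized q²-cosine series cos_α(x;q²). -/
def qCosTerm (q α : ℝ) (x : ℂ) (k : ℕ) : ℂ :=
  (-1) ^ k * (q : ℂ) ^ (k * (k + 1)) * x ^ (2 * k) /
    (qPoch ((q ^ (2 * α + 2 : ℝ) : ℝ) : ℂ) ((q : ℂ) ^ 2) k *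
      qPoch ((q : ℂ) ^ 2) ((q : ℂ) ^ 2) k)

/-- Generalized q²-cosine cos_α(x;q²). -/
def qCos (q α : ℝ) (x : ℂ) : ℂ := ∑' k : ℕ, qCosTerm q α x k

/-- k-th term of the generalized q²-sine series sin_α(x;q²). -/
def qSinTerm (q α : ℝ) (x : ℂ) (k : ℕ) : ℂ :=
  (-1) ^ k * (q : ℂ) ^ (k * (k + 1)) * x ^ (2 * k + 1) /
    (qPoch ((q ^ (2 * α + 2 : ℝ) : ℝ) : ℂ) ((q : ℂ) ^ 2) (k + 1) *
      qPoch ((q : ℂ) ^ 2) ((q : ℂ) ^ 2) k)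

/-- Generalized q²-sine sin_α(x;q²). -/
def qSin (q α : ℝ) (x : ℂ) : ℂ := ∑' k : ℕ, qSinTerm q α x k

/-- Generalized q²-exponential e_α(x;q²) = cos_α(-ix;q²) + i·sin_α(-ix;q²). -/
def qExp (q α : ℝ) (x : ℂ) : ℂ :=
  qCos q α (-Complex.I * x) + Complex.I * qSin q α (-Complex.I * x)

/-- The constant C_{α,q} = (1-q)^α (q^{2α+2};q²)_∞ / (2 (q²;q²)_∞). -/
def Cconst (q α : ℝ) : ℝ :=
  (1 - q) ^ α * qPochInf (q ^ (2 * α + 2 : ℝ)) (q ^ 2) / (2 * qPochInf (q ^ 2) (q ^ 2))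

/-- Bilateral q-Jackson integral ∫_{-∞}^∞ F(x) d_q x, for a ℂ-valued integrand. -/
def jacksonBi (q : ℝ) (F : ℝ → ℂ) : ℂ :=
  ((1 - q : ℝ) : ℂ) * ∑' n : ℤ, (q : ℂ) ^ n * (F (q ^ n) + F (-(q ^ n)))

/-- Bilateral q-Jackson integral ∫_{-∞}^∞ F(x) d_q x, for an ℝ-valued integrand. -/
def jacksonBiR (q : ℝ) (F : ℝ → ℝ) : ℝ :=
  (1 - q) * ∑' n : ℤ, q ^ n * (F (q ^ n) + F (-(q ^ n)))

/-- Generalized q²-Fourier transform f̂(x;q²). -/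
def qFourier (q α : ℝ) (f : ℝ → ℂ) (x : ℝ) : ℂ :=
  (Cconst q α : ℂ) * jacksonBi q (fun t =>
    f t * qExp q α (-Complex.I * (((1 - q) * t * x : ℝ) : ℂ)) * ((|t| ^ (2 * α + 1) : ℝ) : ℂ))

/-- Generalized q-differential operator ∂_{q,α} (for x ≠ 0). -/
def qDeriv (q α : ℝ) (f : ℝ → ℂ) (x : ℝ) : ℂ :=
  (f (q⁻¹ * x) + f (-(q⁻¹ * x)) - ((q ^ (2 * α + 1 : ℝ) : ℝ) : ℂ) * (f x + f (-x))) /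
      (2 * ((1 - q : ℝ) : ℂ) * (x : ℂ)) +
    (f x - f (-x) - ((q ^ (2 * α + 1 : ℝ) : ℝ) : ℂ) * (f (q * x) - f (-(q * x)))) /
      (2 * ((1 - q : ℝ) : ℂ) * (x : ℂ))

/-- q-number [x]_q = (1 - q^x)/(1 - q). -/
def qBracket (q x : ℝ) : ℝ := (1 - q ^ x) / (1 - q)

/-- Generalized q-factorial [m]_{q,α}! = ∏_{j=1}^m [j]_{q,α}, where
[2n]_{q,α} = [2n+2α+1]_q and [2n+1]_{q,α} = [2n+2α+2]_q (both equal [j+2α+1]_q for j = 2n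
resp. j = 2n+1). -/
def qFactG (q α : ℝ) (m : ℕ) : ℝ :=
  ∏ j ∈ Finset.range m, qBracket q ((j : ℝ) + 1 + 2 * α + 1)

/-- Generalized q-shifted factorial (q;q)_{m,α} = (1-q)^m [m]_{q,α}!. -/
def qShiftG (q α : ℝ) (m : ℕ) : ℝ := (1 - q) ^ m * qFactG q α m

/-- q-Gamma function Γ_q(z) = ((q;q)_∞/(q^z;q)_∞)(1-q)^{1-z}. -/
def qGammaF (q z : ℝ) : ℝ := qPochInf q q / qPochInf (q ^ z) q * (1 - q) ^ (1 - z)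

lemma qPochR_cast (a Q : ℝ) (k : ℕ) : ((qPochR a Q k : ℝ) : ℂ) = qPoch (a : ℂ) (Q : ℂ) k := by
  unfold qPochR qPoch; push_cast; rfl

lemma qPochR_pos {a Q : ℝ} (ha0 : 0 ≤ a) (ha1 : a < 1) (hQ0 : 0 ≤ Q) (hQ1 : Q ≤ 1) (k : ℕ) :
    0 < qPochR a Q k := by
  apply Finset.prod_pos
  intro j _
  have h1 : Q ^ j ≤ 1 := pow_le_one₀ hQ0 hQ1
  have h2 : a * Q ^ j ≤ a * 1 := by
    apply mul_le_mul_of_nonneg_left h1 ha0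
  nlinarith

lemma qPochR_ge {a Q : ℝ} (ha0 : 0 ≤ a) (ha1 : a < 1) (hQ0 : 0 ≤ Q) (hQ1 : Q ≤ 1) (k : ℕ) :
    (1 - a) ^ k ≤ qPochR a Q k := by
  unfold qPochR
  have h : (1 - a) ^ k = ∏ _j ∈ Finset.range k, (1 - a) := by
    rw [Finset.prod_const, Finset.card_range]
  rw [h]
  apply Finset.prod_le_prod
  · intro j _; linarith
  · intro j _
    have h1 : Q ^ j ≤ 1 := pow_le_one₀ hQ0 hQ1
    nlinarith

lemma summable_bound (q C M : ℝ) (hq0 : 0 < q) (hq1 : q < 1) (hM : 0 ≤ M)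
    (f : ℕ → ℂ) (hf : ∀ k, ‖f k‖ ≤ C * (q ^ (k * (k + 1)) * M ^ k)) : Summable f := by
  obtain ⟨N, hN⟩ : ∃ N, q ^ N < (1/2) / (M + 1) :=
    exists_pow_lt_of_lt_one (by positivity) hq1
  apply Summable.of_norm_bounded_eventually_nat (g := fun k => C * (1/2 : ℝ) ^ k)
  · exact (summable_geometric_of_lt_one (by norm_num) (by norm_num)).mul_left C
  · filter_upwards [eventually_ge_atTop N] with k hk
    refine (hf k).trans ?_
    have hC : 0 ≤ C := by
      have := (norm_nonneg (f 0)).trans (hf 0)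
      simpa using this
    apply mul_le_mul_of_nonneg_left _ hC
    have h1 : q ^ (k * (k + 1)) * M ^ k = (q ^ (k + 1) * M) ^ k := by
      rw [mul_pow, ← pow_mul, mul_comm (k+1) k]
    rw [h1]
    apply pow_le_pow_left₀ (by positivity)
    have h2 : q ^ (k + 1) ≤ q ^ N := pow_le_pow_of_le_one hq0.le hq1.le (by omega)
    have h3 : q ^ (k+1) * M ≤ q ^ N * (M + 1) := by nlinarith [pow_nonneg hq0.le N]
    have h4 : q ^ N * (M + 1) ≤ 1/2 := by
      have : 0 < M + 1 := by linarith
      calc q ^ N * (M+1) ≤ ((1/2)/(M+1)) * (M+1) := by nlinarith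
        _ = 1/2 := by field_simp
    linarith

section main

lemma ha0' {q : ℝ} (hq0 : 0 < q) (α : ℝ) : (0:ℝ) < q ^ (2 * α + 2 : ℝ) :=
  Real.rpow_pos_of_pos hq0 _

lemma ha1' {q α : ℝ} (hq0 : 0 < q) (hq1 : q < 1) (hα : -1 < α) : q ^ (2 * α + 2 : ℝ) < 1 :=
  Real.rpow_lt_one hq0.le hq1 (by linarith)

lemma norm_qPoch_a {q α : ℝ} (hq0 : 0 < q) (hq1 : q < 1) (hα : -1 < α) (k : ℕ) :
    ‖qPoch ((q ^ (2 * α + 2 : ℝ) : ℝ) : ℂ) ((q : ℂ) ^ 2) k‖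
      = qPochR (q ^ (2 * α + 2 : ℝ)) (q ^ 2) k := by
  have h : ((q:ℂ)^2) = ((q^2 : ℝ) : ℂ) := by push_cast; ring
  rw [h, ← qPochR_cast, Complex.norm_real, Real.norm_of_nonneg
    (qPochR_pos (ha0' hq0 α).le (ha1' hq0 hq1 hα) (by positivity) (by nlinarith) k).le]

lemma norm_qPoch_b {q : ℝ} (hq0 : 0 < q) (hq1 : q < 1) (k : ℕ) :
    ‖qPoch ((q : ℂ) ^ 2) ((q : ℂ) ^ 2) k‖ = qPochR (q ^ 2) (q ^ 2) k := by
  have h : ((q:ℂ)^2) = ((q^2 : ℝ) : ℂ) := by push_cast; ring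
  rw [h, ← qPochR_cast, Complex.norm_real, Real.norm_of_nonneg
    (qPochR_pos (by positivity) (by nlinarith) (by positivity) (by nlinarith) k).le]

lemma summable_qCosTerm {q α : ℝ} (hq0 : 0 < q) (hq1 : q < 1) (hα : -1 < α) (z : ℂ) :
    Summable (qCosTerm q α z) := by
  set a := q ^ (2 * α + 2 : ℝ) with ha
  have h1a : (0:ℝ) < 1 - a := by have := ha1' hq0 hq1 hα; rw [← ha] at this; linarith
  have h1b : (0:ℝ) < 1 - q^2 := by nlinarith
  apply summable_bound q 1 (‖z‖^2 / ((1 - a) * (1 - q^2))) hq0 hq1 (by positivity)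
  intro k
  rw [one_mul]
  have ha2 : (0:ℝ) < a := by rw [ha]; exact ha0' hq0 α
  have hda := qPochR_pos (a := a) (Q := q^2) ha2.le (by linarith) (by positivity) (by nlinarith) k
  have hdb := qPochR_pos (a := q^2) (Q := q^2) (by positivity) (by nlinarith) (by positivity) (by nlinarith) k
  have hga := qPochR_ge (a := a) (Q := q^2) ha2.le (by linarith) (by positivity) (by nlinarith) k
  have hgb := qPochR_ge (a := q^2) (Q := q^2) (by positivity) (by nlinarith) (by positivity) (by nlinarith) k
  rw [qCosTerm, norm_div, norm_mul, norm_mul, norm_mul, norm_pow, norm_pow, norm_pow,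
    norm_qPoch_a hq0 hq1 hα, norm_qPoch_b hq0 hq1, norm_neg, norm_one, one_pow, one_mul,
    Complex.norm_real, Real.norm_of_nonneg hq0.le, ← ha]
  rw [div_pow, ← mul_div_assoc, div_le_div_iff₀ (by positivity) (by positivity)]
  have key : ((1-a) * (1-q^2))^k ≤ qPochR a (q^2) k * qPochR (q^2) (q^2) k := by
    rw [mul_pow]
    exact mul_le_mul hga hgb (by positivity) hda.le
  calc q ^ (k * (k + 1)) * ‖z‖ ^ (2 * k) * ((1 - a) * (1 - q ^ 2)) ^ k
      ≤ q ^ (k * (k + 1)) * ‖z‖ ^ (2 * k) * (qPochR a (q^2) k * qPochR (q^2) (q^2) k) := by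
        apply mul_le_mul_of_nonneg_left key (by positivity)
    _ = q ^ (k * (k + 1)) * (‖z‖ ^ 2) ^ k * (qPochR a (q^2) k * qPochR (q^2) (q^2) k) := by
        rw [← pow_mul]

lemma summable_qSinTerm {q α : ℝ} (hq0 : 0 < q) (hq1 : q < 1) (hα : -1 < α) (z : ℂ) :
    Summable (qSinTerm q α z) := by
  set a := q ^ (2 * α + 2 : ℝ) with ha
  have h1a : (0:ℝ) < 1 - a := by have := ha1' hq0 hq1 hα; rw [← ha] at this; linarith
  have h1b : (0:ℝ) < 1 - q^2 := by nlinarith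
  apply summable_bound q (‖z‖ / (1 - a)) (‖z‖^2 / ((1 - a) * (1 - q^2))) hq0 hq1 (by positivity)
  intro k
  have ha2 : (0:ℝ) < a := by rw [ha]; exact ha0' hq0 α
  have hda := qPochR_pos (a := a) (Q := q^2) ha2.le (by linarith) (by positivity) (by nlinarith) (k+1)
  have hdb := qPochR_pos (a := q^2) (Q := q^2) (by positivity) (by nlinarith) (by positivity) (by nlinarith) k
  have hga := qPochR_ge (a := a) (Q := q^2) ha2.le (by linarith) (by positivity) (by nlinarith) (k+1)
  have hgb := qPochR_ge (a := q^2) (Q := q^2) (by positivity) (by nlinarith) (by positivity) (by nlinarith) k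
  rw [qSinTerm, norm_div, norm_mul, norm_mul, norm_mul, norm_pow, norm_pow, norm_pow,
    norm_qPoch_a hq0 hq1 hα, norm_qPoch_b hq0 hq1, norm_neg, norm_one, one_pow, one_mul,
    Complex.norm_real, Real.norm_of_nonneg hq0.le, ← ha]
  rw [div_le_iff₀ (by positivity)]
  have key : (1-a)^(k+1) * (1-q^2)^k ≤ qPochR a (q^2) (k+1) * qPochR (q^2) (q^2) k :=
    mul_le_mul hga hgb (by positivity) hda.le
  have hrhs : ‖z‖ / (1 - a) * (q ^ (k * (k + 1)) * (‖z‖ ^ 2 / ((1 - a) * (1 - q ^ 2))) ^ k)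
      * ((1-a)^(k+1) * (1-q^2)^k)
      ≤ ‖z‖ / (1 - a) * (q ^ (k * (k + 1)) * (‖z‖ ^ 2 / ((1 - a) * (1 - q ^ 2))) ^ k)
      * (qPochR a (q ^ 2) (k + 1) * qPochR (q ^ 2) (q ^ 2) k) := by
    apply mul_le_mul_of_nonneg_left key (by positivity)
  refine le_trans ?_ hrhs
  have heq : ‖z‖ / (1 - a) * (q ^ (k * (k + 1)) * (‖z‖ ^ 2 / ((1 - a) * (1 - q ^ 2))) ^ k)
      * ((1-a)^(k+1) * (1-q^2)^k) = q ^ (k * (k + 1)) * ‖z‖ ^ (2 * k + 1) := by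
    rw [div_pow, mul_pow, pow_mul]
    field_simp
    ring
  rw [heq]

end main

lemma qSinTerm_mul (q α : ℝ) (z : ℂ) (k : ℕ) :
    qSinTerm q α ((q : ℂ) * z) k = (q : ℂ) ^ (2 * k + 1) * qSinTerm q α z k := by
  rw [qSinTerm, qSinTerm, mul_pow]
  ring

lemma qSin_term_key {q α : ℝ} (hq0 : 0 < q) (hq1 : q < 1) (hα : -1 < α) (z : ℂ) (k : ℕ) :
    qSinTerm q α z k - ((q ^ (2 * α + 1 : ℝ) : ℝ) : ℂ) * qSinTerm q α ((q : ℂ) * z) k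
      = z * qCosTerm q α z k := by
  have ha2 : (0:ℝ) < q ^ (2 * α + 2 : ℝ) := ha0' hq0 α
  have ha3 : q ^ (2 * α + 2 : ℝ) < 1 := ha1' hq0 hq1 hα
  have hq2k : (q:ℝ)^2 * ((q:ℝ)^2)^k ≤ 1 := by
    have h1 : ((q:ℝ)^2)^(k+1) ≤ 1 := pow_le_one₀ (by positivity) (by nlinarith)
    calc (q:ℝ)^2 * ((q:ℝ)^2)^k = ((q:ℝ)^2)^(k+1) := by ring
      _ ≤ 1 := h1
  have hFR : (0:ℝ) < 1 - q ^ (2 * α + 2 : ℝ) * (q^2)^k := by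
    have h1 : ((q:ℝ)^2)^k ≤ 1 := pow_le_one₀ (by positivity) (by nlinarith)
    nlinarith
  have hsplit : qPoch ((q ^ (2 * α + 2 : ℝ) : ℝ) : ℂ) ((q : ℂ) ^ 2) (k + 1)
      = qPoch ((q ^ (2 * α + 2 : ℝ) : ℝ) : ℂ) ((q : ℂ) ^ 2) k
        * (1 - ((q ^ (2 * α + 2 : ℝ) : ℝ) : ℂ) * ((q : ℂ) ^ 2) ^ k) :=
    Finset.prod_range_succ _ k
  have hPa : qPoch ((q ^ (2 * α + 2 : ℝ) : ℝ) : ℂ) ((q : ℂ) ^ 2) k ≠ 0 := by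
    rw [← norm_ne_zero_iff, norm_qPoch_a hq0 hq1 hα]
    exact (qPochR_pos ha2.le ha3 (by positivity) (by nlinarith) k).ne'
  have hPb : qPoch ((q : ℂ) ^ 2) ((q : ℂ) ^ 2) k ≠ 0 := by
    rw [← norm_ne_zero_iff, norm_qPoch_b hq0 hq1]
    exact (qPochR_pos (by positivity) (by nlinarith) (by positivity) (by nlinarith) k).ne'
  have hF : (1 - ((q ^ (2 * α + 2 : ℝ) : ℝ) : ℂ) * ((q : ℂ) ^ 2) ^ k) ≠ 0 := by
    have h2 : ((q ^ (2 * α + 2 : ℝ) : ℝ) : ℂ) * ((q : ℂ) ^ 2) ^ k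
        = ((q ^ (2 * α + 2 : ℝ) * (q^2)^k : ℝ) : ℂ) := by push_cast; ring
    rw [h2, ← Complex.ofReal_one, ← Complex.ofReal_sub]
    exact_mod_cast hFR.ne'
  have hr : q ^ (2 * α + 1 : ℝ) * q ^ (2 * k + 1) = q ^ (2 * α + 2 : ℝ) * (q ^ 2) ^ k := by
    rw [← pow_mul, ← Real.rpow_natCast q (2 * k + 1), ← Real.rpow_add hq0,
      ← Real.rpow_natCast q (2 * k), ← Real.rpow_add hq0]
    congr 1
    push_cast
    ring
  have hc : ((q ^ (2 * α + 1 : ℝ) : ℝ) : ℂ) * (q : ℂ) ^ (2 * k + 1)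
      = ((q ^ (2 * α + 2 : ℝ) : ℝ) : ℂ) * ((q : ℂ) ^ 2) ^ k := by
    have h := congrArg (Complex.ofReal) hr
    push_cast at h
    exact h
  have e2 : (1 - ((q ^ (2 * α + 2 : ℝ) : ℝ) : ℂ) * ((q : ℂ) ^ 2) ^ k) * qSinTerm q α z k
      = z * qCosTerm q α z k := by
    rw [qSinTerm, qCosTerm, hsplit]
    rw [mul_div_assoc', mul_div_assoc', div_eq_div_iff (mul_ne_zero (mul_ne_zero hPa hF) hPb)
      (mul_ne_zero hPa hPb)]
    ring
  calc qSinTerm q α z k - ((q ^ (2 * α + 1 : ℝ) : ℝ) : ℂ) * qSinTerm q α ((q : ℂ) * z) k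
      = (1 - ((q ^ (2 * α + 1 : ℝ) : ℝ) : ℂ) * (q : ℂ) ^ (2 * k + 1)) * qSinTerm q α z k := by
        rw [qSinTerm_mul]; ring
    _ = (1 - ((q ^ (2 * α + 2 : ℝ) : ℝ) : ℂ) * ((q : ℂ) ^ 2) ^ k) * qSinTerm q α z k := by
        rw [hc]
    _ = z * qCosTerm q α z k := e2

lemma qSin_sub {q α : ℝ} (hq0 : 0 < q) (hq1 : q < 1) (hα : -1 < α) (z : ℂ) :
    qSin q α z - ((q ^ (2 * α + 1 : ℝ) : ℝ) : ℂ) * qSin q α ((q : ℂ) * z)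
      = z * qCos q α z := by
  rw [qSin, qSin, qCos, ← tsum_mul_left (a := ((q ^ (2 * α + 1 : ℝ) : ℝ) : ℂ)),
    ← Summable.tsum_sub (summable_qSinTerm hq0 hq1 hα z)
      ((summable_qSinTerm hq0 hq1 hα _).mul_left _),
    ← tsum_mul_left (a := z)]
  exact tsum_congr fun k => qSin_term_key hq0 hq1 hα z k

lemma qSin_neg (q α : ℝ) (z : ℂ) : qSin q α (-z) = -qSin q α z := by
  rw [qSin, qSin, ← tsum_neg]
  refine tsum_congr fun k => ?_
  rw [qSinTerm, qSinTerm, Odd.neg_pow ⟨k, by ring⟩ z]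
  ring

/-- ∂_{q,α} sin_α((1-q)xt;q²) = t cos_α((1-q)xt;q²). -/
theorem qDeriv_qSin (q α : ℝ) (hq0 : 0 < q) (hq1 : q < 1) (hα : -1 < α) (t : ℂ) (x : ℝ)
    (hx : x ≠ 0) :
    qDeriv q α (fun u => qSin q α ((((1 - q) * u : ℝ) : ℂ) * t)) x =
      t * qCos q α ((((1 - q) * x : ℝ) : ℂ) * t) := by
  have h1 : ∀ v : ℝ, qSin q α ((((1 - q) * (-v) : ℝ) : ℂ) * t)
      = -qSin q α ((((1 - q) * v : ℝ) : ℂ) * t) := by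
    intro v
    rw [show ((((1 - q) * (-v) : ℝ) : ℂ) * t) = -(((((1 - q) * v : ℝ)) : ℂ) * t) by
      push_cast; ring]
    exact qSin_neg q α _
  rw [qDeriv]
  simp only [h1]
  have harg : ((((1 - q) * (q * x) : ℝ)) : ℂ) * t = (q : ℂ) * (((((1 - q) * x : ℝ)) : ℂ) * t) := by
    push_cast; ring
  rw [harg]
  have key := qSin_sub hq0 hq1 hα ((((1 - q) * x : ℝ) : ℂ) * t)
  have hq1C : ((1 - q : ℝ) : ℂ) ≠ 0 := by
    exact_mod_cast (by linarith : (1 - q : ℝ) ≠ 0)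
  have hxC : (x : ℂ) ≠ 0 := Complex.ofReal_ne_zero.mpr hx
  set S1 := qSin q α ((((1 - q) * x : ℝ) : ℂ) * t) with hS1
  set S2 := qSin q α ((q : ℂ) * ((((1 - q) * x : ℝ) : ℂ) * t)) with hS2
  set Co := qCos q α ((((1 - q) * x : ℝ) : ℂ) * t) with hCo
  have hsplitA : (((1 - q) * x : ℝ) : ℂ) = ((1 - q : ℝ) : ℂ) * (x : ℂ) := by push_cast; ring
  rw [hsplitA] at key
  have hq1C' : (1 : ℂ) - (q : ℂ) ≠ 0 := by
    rw [show (1 : ℂ) - (q : ℂ) = ((1 - q : ℝ) : ℂ) by push_cast; ring]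
    exact hq1C
  rw [show ((1 - q : ℝ) : ℂ) = 1 - (q : ℂ) by push_cast; ring] at key ⊢
  field_simp
  linear_combination (2 : ℂ) * key
end
end

section
/- Let α>-1 and x∈ℂ be fixed. Then as q tends to 1 from below, cos_α((1-q)x;q²) tends to the hypergeometric series ₀F₁(—;α+1;-x²/4) = Σ_{k=0}^∞ (-x²/4)^k / (k! (α+1)_k), where (α+1)_k = (α+1)(α+2)⋯(α+k) is the Pochhammer symbol. -/
noncomputable section

open Complex Filter Topology

lemma one_sub_rpow_pos {β q : ℝ} (hβ : 0 < β) (hq0 : 0 < q) (hq1 : q < 1) :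
    0 < 1 - q ^ β := by
  have := Real.rpow_lt_one hq0.le hq1 hβ
  linarith

lemma key_ineq {β q : ℝ} (hβ : 0 < β) (hq0 : 0 < q) (hq1 : q < 1) :
    (1-q)/(1-q^β) ≤ 1/β + (1-q) := by
  have ht : 0 < 1 - q := by linarith
  have h1 : q ^ β ≤ Real.exp (-(β*(1-q))) := by
    have h : q ≤ Real.exp (q-1) := by have := Real.add_one_le_exp (q-1); linarith
    calc q ^ β ≤ (Real.exp (q-1)) ^ β := Real.rpow_le_rpow hq0.le h hβ.le
      _ = Real.exp (-(β*(1-q))) := by rw [← Real.exp_mul]; ring_nf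
  have h2 : Real.exp (-(β*(1-q))) ≤ 1/(1 + β*(1-q)) := by
    have hpos : 0 < 1 + β*(1-q) := by positivity
    have hle := Real.add_one_le_exp (β*(1-q))
    rw [Real.exp_neg, inv_eq_one_div, div_le_div_iff₀ (Real.exp_pos _) hpos]
    nlinarith [Real.exp_pos (β*(1-q))]
  have h3 : β*(1-q)/(1 + β*(1-q)) ≤ 1 - q ^ β := by
    have hpos : 0 < 1 + β*(1-q) := by positivity
    have h5 : q ^ β ≤ 1/(1+β*(1-q)) := h1.trans h2
    have h6 : 1 - 1/(1+β*(1-q)) ≤ 1 - q^β := by linarith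
    calc β*(1-q)/(1 + β*(1-q)) = 1 - 1/(1+β*(1-q)) := by field_simp; ring
      _ ≤ _ := h6
  have hd := one_sub_rpow_pos hβ hq0 hq1
  rw [div_le_iff₀ hd]
  have h4 : (1-q) = (1/β + (1-q)) * (β*(1-q)/(1 + β*(1-q))) := by
    have hpos : (0:ℝ) < 1 + β*(1-q) := by positivity
    field_simp
  calc (1-q) = (1/β + (1-q)) * (β*(1-q)/(1 + β*(1-q))) := h4
    _ ≤ (1/β + (1-q)) * (1 - q^β) := by
        apply mul_le_mul_of_nonneg_left h3 (by positivity)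

lemma qPoch_ofReal (a b : ℝ) (k : ℕ) : qPoch (a:ℂ) (b:ℂ) k = ((qPochR a b k : ℝ) : ℂ) := by
  simp [qPoch, qPochR]

lemma P1_eq {q : ℝ} (hq0 : 0 < q) (α : ℝ) (k : ℕ) :
    qPochR (q ^ (2*α+2 : ℝ)) (q^2) k = ∏ j ∈ Finset.range k, (1 - q ^ (2*α+2+2*(j:ℝ))) := by
  unfold qPochR
  refine Finset.prod_congr rfl fun j _ => ?_
  rw [← pow_mul, ← Real.rpow_natCast q (2*j), ← Real.rpow_add hq0]
  push_cast; ring_nf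

lemma P2_eq {q : ℝ} (hq0 : 0 < q) (k : ℕ) :
    qPochR (q^2) (q^2) k = ∏ j ∈ Finset.range k, (1 - q ^ (2*(j:ℝ)+2)) := by
  unfold qPochR
  refine Finset.prod_congr rfl fun j _ => ?_
  rw [← pow_succ', ← pow_mul, ← Real.rpow_natCast q (2*(j+1))]
  push_cast; ring_nf

lemma qCosTerm_prod_form {q : ℝ} (hq0 : 0 < q) (hq1 : q < 1) {α : ℝ} (hα : -1 < α)
    (x : ℂ) (k : ℕ) :
    qCosTerm q α (((1-q : ℝ) : ℂ) * x) k =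
      (-1)^k * (q:ℂ)^(k*(k+1)) * x^(2*k) *
        ((∏ j ∈ Finset.range k,
          ((1-q)/(1-q^(2*α+2+2*(j:ℝ))) * ((1-q)/(1-q^(2*(j:ℝ)+2)))) : ℝ) : ℂ) := by
  have ha : ∀ j : ℕ, 0 < 1 - q ^ (2*α+2+2*(j:ℝ)) := fun j =>
    one_sub_rpow_pos (by have h := Nat.cast_nonneg (α := ℝ) j; linarith) hq0 hq1
  have hb : ∀ j : ℕ, 0 < 1 - q ^ (2*(j:ℝ)+2) := fun j =>
    one_sub_rpow_pos (by positivity) hq0 hq1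
  set P1r := ∏ j ∈ Finset.range k, (1 - q ^ (2*α+2+2*(j:ℝ))) with hP1def
  set P2r := ∏ j ∈ Finset.range k, (1 - q ^ (2*(j:ℝ)+2)) with hP2def
  have hP1 : (0:ℝ) < P1r := Finset.prod_pos fun j _ => ha j
  have hP2 : (0:ℝ) < P2r := Finset.prod_pos fun j _ => hb j
  have hprod : (∏ j ∈ Finset.range k,
      ((1-q)/(1-q^(2*α+2+2*(j:ℝ))) * ((1-q)/(1-q^(2*(j:ℝ)+2)))))
      = (1-q)^(2*k) / (P1r * P2r) := by
    rw [Finset.prod_mul_distrib, Finset.prod_div_distrib, Finset.prod_div_distrib,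
      Finset.prod_const, Finset.card_range, ← hP1def, ← hP2def, div_mul_div_comm,
      ← pow_add, two_mul]
  have e1 : qPoch ((q ^ (2*α+2:ℝ) : ℝ) : ℂ) ((q:ℂ)^2) k = ((P1r : ℝ) : ℂ) := by
    rw [show ((q:ℂ)^2) = (((q^2 : ℝ)) : ℂ) by push_cast; ring, qPoch_ofReal, P1_eq hq0]
  have e2 : qPoch ((q:ℂ)^2) ((q:ℂ)^2) k = ((P2r : ℝ) : ℂ) := by
    rw [show ((q:ℂ)^2) = (((q^2 : ℝ)) : ℂ) by push_cast; ring, qPoch_ofReal, P2_eq hq0]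
  rw [qCosTerm, e1, e2, hprod]
  have h1 : ((P1r:ℝ):ℂ) ≠ 0 := by exact_mod_cast hP1.ne'
  have h2 : ((P2r:ℝ):ℂ) ≠ 0 := by exact_mod_cast hP2.ne'
  push_cast
  rw [mul_pow]
  field_simp

lemma rr_tendsto {β : ℝ} (hβ : 0 < β) :
    Filter.Tendsto (fun q : ℝ => (1-q)/(1-q^β)) (nhdsWithin 1 (Set.Ioo 0 1)) (nhds (1/β)) := by
  have hd : HasDerivAt (fun x : ℝ => x ^ β) (β * (1:ℝ) ^ (β - 1)) 1 :=
    Real.hasDerivAt_rpow_const (Or.inl one_ne_zero)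
  rw [hasDerivAt_iff_tendsto_slope] at hd
  have hβ1 : β * (1:ℝ) ^ (β-1) = β := by simp [Real.one_rpow]
  rw [hβ1] at hd
  have hsub : Set.Ioo (0:ℝ) 1 ⊆ {(1:ℝ)}ᶜ := fun y hy => ne_of_lt hy.2
  have hd2 := hd.mono_left (nhdsWithin_mono 1 hsub)
  have hinv := hd2.inv₀ hβ.ne'
  rw [show (β⁻¹ : ℝ) = 1/β by rw [one_div]] at hinv
  refine hinv.congr fun q => ?_
  rw [slope_def_field]
  simp only [Real.one_rpow]
  rw [inv_div, show (q:ℝ)-1 = -(1-q) by ring, show q^β-1 = -(1-q^β) by ring, neg_div_neg_eq]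

lemma limit_value_eq {α : ℝ} (hα : -1 < α) (x : ℂ) (k : ℕ) :
    (-1:ℂ)^k * (1:ℂ) * x^(2*k) *
        ((∏ j ∈ Finset.range k, (1/(2*α+2+2*(j:ℝ)) * (1/(2*(j:ℝ)+2))) : ℝ) : ℂ)
      = (-x^2/4)^k / ((k.factorial : ℂ) * ∏ j ∈ Finset.range k, ((α:ℂ)+1+(j:ℂ))) := by
  have hcast : ((∏ j ∈ Finset.range k, (1/(2*α+2+2*(j:ℝ)) * (1/(2*(j:ℝ)+2))) : ℝ) : ℂ)
      = ∏ j ∈ Finset.range k, ((1/(2*(α:ℂ)+2+2*(j:ℂ))) * (1/(2*(j:ℂ)+2))) := by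
    push_cast
    rfl
  rw [hcast]
  have hfac : ∏ j ∈ Finset.range k, ((j:ℂ)+1) = (k.factorial : ℂ) := by
    exact_mod_cast congrArg (Nat.cast : ℕ → ℂ) (Finset.prod_range_add_one_eq_factorial k)
  have hprod : ∏ j ∈ Finset.range k, ((1/(2*(α:ℂ)+2+2*(j:ℂ))) * (1/(2*(j:ℂ)+2)))
      = ((4:ℂ)⁻¹)^k * (∏ j ∈ Finset.range k, ((α:ℂ)+1+(j:ℂ)))⁻¹ * ((k.factorial : ℂ))⁻¹ := by
    rw [← hfac, ← Finset.prod_inv_distrib, ← Finset.prod_inv_distrib,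
      show ((4:ℂ)⁻¹)^k = ∏ _j ∈ Finset.range k, (4:ℂ)⁻¹ by simp,
      ← Finset.prod_mul_distrib, ← Finset.prod_mul_distrib]
    refine Finset.prod_congr rfl fun j _ => ?_
    rw [show (2*(α:ℂ)+2+2*(j:ℂ)) = 2*((α:ℂ)+1+(j:ℂ)) by ring,
      show (2*(j:ℂ)+2) = 2*((j:ℂ)+1) by ring, one_div, one_div, mul_inv, mul_inv]
    ring
  rw [hprod]
  have hpow : (-x^2/4)^k = (-1:ℂ)^k * (x^2)^k * ((4:ℂ)⁻¹)^k := by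
    rw [← mul_pow, ← mul_pow]; congr 1; ring
  rw [hpow, pow_mul, div_eq_mul_inv, mul_inv]
  ring

lemma term_tendsto {α : ℝ} (hα : -1 < α) (x : ℂ) (k : ℕ) :
    Filter.Tendsto (fun q : ℝ => qCosTerm q α (((1-q : ℝ) : ℂ) * x) k)
      (nhdsWithin 1 (Set.Ioo 0 1))
      (nhds ((-x^2/4)^k / ((k.factorial : ℂ) * ∏ j ∈ Finset.range k, ((α:ℂ)+1+(j:ℂ))))) := by
  have h2 : Filter.Tendsto
      (fun q : ℝ => (∏ j ∈ Finset.range k,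
        ((1-q)/(1-q^(2*α+2+2*(j:ℝ))) * ((1-q)/(1-q^(2*(j:ℝ)+2))))))
      (nhdsWithin 1 (Set.Ioo 0 1))
      (nhds (∏ j ∈ Finset.range k, (1/(2*α+2+2*(j:ℝ)) * (1/(2*(j:ℝ)+2))))) := by
    refine tendsto_finset_prod _ fun j _ => ?_
    exact (rr_tendsto (by have h := Nat.cast_nonneg (α := ℝ) j; linarith)).mul
      (rr_tendsto (by positivity))
  have hq : Filter.Tendsto (fun q : ℝ => ((q:ℂ))^(k*(k+1))) (nhdsWithin 1 (Set.Ioo 0 1))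
      (nhds 1) := by
    have := ((Complex.continuous_ofReal.tendsto 1).mono_left
      (nhdsWithin_le_nhds (s := Set.Ioo (0:ℝ) 1))).pow (k*(k+1))
    simpa using this
  have hmain := ((tendsto_const_nhds (x := ((-1:ℂ))^k)).mul hq).mul
      (tendsto_const_nhds (x := x^(2*k))) |>.mul
      ((Complex.continuous_ofReal.tendsto _).comp h2)
  rw [← limit_value_eq hα x k]
  refine Filter.Tendsto.congr' ?_ hmain
  filter_upwards [self_mem_nhdsWithin] with q hq'
  exact (qCosTerm_prod_form hq'.1 hq'.2 hα x k).symm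

def gbound (α t0 c : ℝ) (k : ℕ) : ℝ :=
  (c^2)^k * ∏ j ∈ Finset.range k, ((1/(2*α+2+2*(j:ℝ))+t0) * (1/(2*(j:ℝ)+2)+t0))

lemma term_bound {α : ℝ} (hα : -1 < α) (x : ℂ) {t0 c q : ℝ} (ht0 : 0 < t0)
    (hc : ‖x‖ ≤ c) (hq0 : 0 < q) (hq1 : q < 1) (hqt : 1 - q ≤ t0) (k : ℕ) :
    ‖qCosTerm q α (((1-q : ℝ) : ℂ) * x) k‖ ≤ gbound α t0 c k := by
  have hcpos : 0 ≤ c := (norm_nonneg x).trans hc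
  rw [qCosTerm_prod_form hq0 hq1 hα x k]
  have ha : ∀ j : ℕ, 0 < 1 - q ^ (2*α+2+2*(j:ℝ)) := fun j =>
    one_sub_rpow_pos (by have h := Nat.cast_nonneg (α := ℝ) j; linarith) hq0 hq1
  have hb : ∀ j : ℕ, 0 < 1 - q ^ (2*(j:ℝ)+2) := fun j =>
    one_sub_rpow_pos (by positivity) hq0 hq1
  have hprodnn : 0 ≤ ∏ j ∈ Finset.range k,
      ((1-q)/(1-q^(2*α+2+2*(j:ℝ))) * ((1-q)/(1-q^(2*(j:ℝ)+2)))) :=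
    Finset.prod_nonneg fun j _ => mul_nonneg
      (div_nonneg (by linarith) (ha j).le) (div_nonneg (by linarith) (hb j).le)
  simp only [norm_mul, norm_pow, norm_neg, norm_one, one_pow, Complex.norm_real,
    Real.norm_eq_abs]
  rw [_root_.abs_of_nonneg hprodnn, _root_.abs_of_nonneg hq0.le]
  have h1 : q ^ (k*(k+1)) ≤ 1 := pow_le_one₀ hq0.le hq1.le
  have h2 : ‖x‖^(2*k) ≤ (c^2)^k := by
    rw [← pow_mul]
    exact pow_le_pow_left₀ (norm_nonneg x) hc (2*k)
  have h3 : ∏ j ∈ Finset.range k,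
      ((1-q)/(1-q^(2*α+2+2*(j:ℝ))) * ((1-q)/(1-q^(2*(j:ℝ)+2))))
      ≤ ∏ j ∈ Finset.range k, ((1/(2*α+2+2*(j:ℝ))+t0) * (1/(2*(j:ℝ)+2)+t0)) := by
    refine Finset.prod_le_prod (fun j _ => mul_nonneg
      (div_nonneg (by linarith) (ha j).le) (div_nonneg (by linarith) (hb j).le))
      (fun j _ => ?_)
    have hA := key_ineq (β := 2*α+2+2*(j:ℝ))
      (by have h := Nat.cast_nonneg (α := ℝ) j; linarith) hq0 hq1
    have hB := key_ineq (β := 2*(j:ℝ)+2) (by positivity) hq0 hq1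
    refine mul_le_mul (hA.trans (by linarith)) (hB.trans (by linarith))
      (div_nonneg (by linarith) (hb j).le) ?_
    have : (0:ℝ) < 1/(2*α+2+2*(j:ℝ)) := by
      have h := Nat.cast_nonneg (α := ℝ) j
      exact one_div_pos.mpr (by linarith)
    linarith
  unfold gbound
  have hQ : 0 ≤ ∏ j ∈ Finset.range k, ((1/(2*α+2+2*(j:ℝ))+t0) * (1/(2*(j:ℝ)+2)+t0)) := by
    refine Finset.prod_nonneg fun j _ => mul_nonneg ?_ ?_
    · have h := Nat.cast_nonneg (α := ℝ) j
      have : (0:ℝ) < 1/(2*α+2+2*(j:ℝ)) := one_div_pos.mpr (by linarith)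
      linarith
    · have : (0:ℝ) < 1/(2*(j:ℝ)+2) := by positivity
      linarith
  calc 1 * q^(k*(k+1)) * ‖x‖^(2*k) *
      (∏ j ∈ Finset.range k, ((1-q)/(1-q^(2*α+2+2*(j:ℝ))) * ((1-q)/(1-q^(2*(j:ℝ)+2)))))
      = q^(k*(k+1)) * (‖x‖^(2*k) *
        ∏ j ∈ Finset.range k, ((1-q)/(1-q^(2*α+2+2*(j:ℝ))) * ((1-q)/(1-q^(2*(j:ℝ)+2))))) := by
        ring
    _ ≤ 1 * (‖x‖^(2*k) *
        ∏ j ∈ Finset.range k, ((1-q)/(1-q^(2*α+2+2*(j:ℝ))) * ((1-q)/(1-q^(2*(j:ℝ)+2))))) :=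
        mul_le_mul_of_nonneg_right h1
          (mul_nonneg (pow_nonneg (norm_nonneg x) _) hprodnn)
    _ = ‖x‖^(2*k) *
        ∏ j ∈ Finset.range k, ((1-q)/(1-q^(2*α+2+2*(j:ℝ))) * ((1-q)/(1-q^(2*(j:ℝ)+2)))) :=
        one_mul _
    _ ≤ (c^2)^k * ∏ j ∈ Finset.range k, ((1/(2*α+2+2*(j:ℝ))+t0) * (1/(2*(j:ℝ)+2)+t0)) :=
        mul_le_mul h2 h3 hprodnn (by positivity)

lemma gbound_pos {α : ℝ} (hα : -1 < α) {c t0 : ℝ} (hc : 1 ≤ c) (ht0 : 0 < t0) (k : ℕ) :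
    0 < gbound α t0 c k := by
  have hc0 : (0:ℝ) < c := lt_of_lt_of_le one_pos hc
  refine mul_pos (pow_pos (by positivity) _) (Finset.prod_pos fun j _ => mul_pos ?_ ?_)
  · have h := Nat.cast_nonneg (α := ℝ) j
    have : (0:ℝ) < 1/(2*α+2+2*(j:ℝ)) := one_div_pos.mpr (by linarith)
    linarith
  · have : (0:ℝ) < 1/(2*(j:ℝ)+2) := by positivity
    linarith

lemma gbound_summable {α : ℝ} (hα : -1 < α) {c : ℝ} (hc : 1 ≤ c) :
    Summable (gbound α (1/(2*c^2)) c) := by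
  have hc0 : (0:ℝ) < c := lt_of_lt_of_le one_pos hc
  set t0 : ℝ := 1/(2*c^2) with ht0def
  have ht0 : 0 < t0 := by positivity
  have hpos := fun k => gbound_pos hα hc ht0 k
  apply summable_of_ratio_test_tendsto_lt_one (l := c^2*(t0*t0))
  · have he : c^2*(t0*t0) = 1/(4*c^2) := by rw [ht0def]; field_simp; ring
    rw [he, div_lt_one (by positivity)]
    nlinarith
  · exact Filter.Eventually.of_forall fun n => (hpos n).ne'
  · have hratio : ∀ n : ℕ, ‖gbound α t0 c (n+1)‖ / ‖gbound α t0 c n‖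
        = c^2 * ((1/(2*α+2+2*(n:ℝ))+t0) * (1/(2*(n:ℝ)+2)+t0)) := by
      intro n
      have hfac : 0 < (1/(2*α+2+2*(n:ℝ))+t0) * (1/(2*(n:ℝ)+2)+t0) := by
        have h := Nat.cast_nonneg (α := ℝ) n
        have h1 : (0:ℝ) < 1/(2*α+2+2*(n:ℝ)) := one_div_pos.mpr (by linarith)
        have h2 : (0:ℝ) < 1/(2*(n:ℝ)+2) := by positivity
        exact mul_pos (by linarith) (by linarith)
      have hsucc : gbound α t0 c (n+1)
          = (c^2 * ((1/(2*α+2+2*(n:ℝ))+t0) * (1/(2*(n:ℝ)+2)+t0))) * gbound α t0 c n := by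
        unfold gbound
        rw [pow_succ, Finset.prod_range_succ]
        ring
      rw [Real.norm_eq_abs, Real.norm_eq_abs, ← abs_div, hsucc,
        mul_div_assoc, div_self (hpos n).ne', mul_one]
      exact _root_.abs_of_nonneg (by positivity)
    have t1 : Filter.Tendsto (fun n : ℕ => 1/(2*α+2+2*(n:ℝ))) Filter.atTop (nhds 0) := by
      simp only [one_div]
      apply Filter.Tendsto.inv_tendsto_atTop
      apply Filter.tendsto_atTop_add_const_left
      exact (tendsto_natCast_atTop_atTop (R := ℝ)).const_mul_atTop two_pos
    have t2 : Filter.Tendsto (fun n : ℕ => 1/(2*(n:ℝ)+2)) Filter.atTop (nhds 0) := by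
      simp only [one_div]
      apply Filter.Tendsto.inv_tendsto_atTop
      apply Filter.tendsto_atTop_add_const_right
      exact (tendsto_natCast_atTop_atTop (R := ℝ)).const_mul_atTop two_pos
    have := tendsto_const_nhds (x := c^2) (f := Filter.atTop (α := ℕ)) |>.mul
      (((t1.add (tendsto_const_nhds (x := t0))).mul (t2.add (tendsto_const_nhds (x := t0)))))
    simp only [zero_add] at this
    exact Filter.Tendsto.congr (fun n => (hratio n).symm) this


/-- lim_{q→1⁻} cos_α((1-q)x;q²) = ₀F₁(—;α+1;-x²/4). -/
theorem qCos_tendsto_hypergeom (α : ℝ) (hα : -1 < α) (x : ℂ) :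
    Filter.Tendsto (fun q : ℝ => qCos q α (((1 - q : ℝ) : ℂ) * x))
      (nhdsWithin 1 (Set.Ioo 0 1))
      (nhds (∑' k : ℕ, (-x ^ 2 / 4) ^ k /
        ((k.factorial : ℂ) * ∏ j ∈ Finset.range k, ((α : ℂ) + 1 + (j : ℂ))))) := by
  have hc : 1 ≤ ‖x‖ + 1 := by linarith [norm_nonneg x]
  set c : ℝ := ‖x‖ + 1 with hcdef
  have hc0 : (0:ℝ) < c := lt_of_lt_of_le one_pos hc
  set t0 : ℝ := 1/(2*c^2) with ht0def
  have ht0 : 0 < t0 := by positivity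
  simp only [qCos]
  apply tendsto_tsum_of_dominated_convergence (gbound_summable hα hc)
    (fun k => term_tendsto hα x k)
  have h1 : ∀ᶠ q in nhdsWithin 1 (Set.Ioo (0:ℝ) 1), q ∈ Set.Ioo (0:ℝ) 1 :=
    eventually_mem_nhdsWithin
  have h2 : ∀ᶠ q in nhdsWithin 1 (Set.Ioo (0:ℝ) 1), 1 - t0 < q :=
    Filter.Eventually.filter_mono nhdsWithin_le_nhds
      (eventually_gt_nhds (show (1:ℝ)-t0 < 1 by linarith))
  filter_upwards [h1, h2] with q hq hqt k
  exact term_bound hα x ht0 (by linarith) hq.1 hq.2 (by linarith) k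
end
end

section
/- Let x∈ℂ be fixed. Then as q tends to 1 from below, sin_{-1/2}((1-q)x;q²) tends to sin x, where sin_{-1/2}(y;q²) = Σ_{k=0}^∞ (-1)^k q^{k(k+1)} y^{2k+1} / ((q;q²)_{k+1} (q²;q²)_k). -/
noncomputable section

open Complex Filter Topology

/-- Auxiliary: product identity for the q-Pochhammer denominators. -/
lemma myAux_poch_mul_eq_prod (c : ℂ) (k : ℕ) :
    qPoch c (c ^ 2) (k + 1) * qPoch (c ^ 2) (c ^ 2) k
      = ∏ j ∈ Finset.range (2 * k + 1), (1 - c ^ (j + 1)) := by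
  induction k with
  | zero => simp [qPoch]
  | succ k ih =>
    have h1 : qPoch c (c ^ 2) (k + 1 + 1)
        = qPoch c (c ^ 2) (k + 1) * (1 - c * (c ^ 2) ^ (k + 1)) := by
      rw [qPoch, qPoch, Finset.prod_range_succ]
    have h2 : qPoch (c ^ 2) (c ^ 2) (k + 1)
        = qPoch (c ^ 2) (c ^ 2) k * (1 - c ^ 2 * (c ^ 2) ^ k) := by
      rw [qPoch, qPoch, Finset.prod_range_succ]
    have h3 : 2 * (k + 1) + 1 = (2 * k + 1) + 1 + 1 := by ring
    rw [h1, h2, h3, Finset.prod_range_succ, Finset.prod_range_succ, ← ih]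
    ring

/-- Auxiliary: real denominator product. -/
def myAux_D (q : ℝ) (k : ℕ) : ℝ := ∏ j ∈ Finset.range (2 * k + 1), (1 - q ^ (j + 1))

lemma myAux_D_pos {q : ℝ} (h0 : 0 < q) (h1 : q < 1) (k : ℕ) : 0 < myAux_D q k := by
  refine Finset.prod_pos fun j _ => ?_
  have : q ^ (j + 1) < 1 := pow_lt_one₀ h0.le h1 (Nat.succ_ne_zero j)
  linarith

lemma myAux_qSinTerm_eq (q : ℝ) (x : ℂ) (k : ℕ) :
    qSinTerm q (-(1 / 2)) x k
      = (-1) ^ k * (q : ℂ) ^ (k * (k + 1)) * x ^ (2 * k + 1) / ((myAux_D q k : ℝ) : ℂ) := by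
  have he : (2 * (-(1 / 2) : ℝ) + 2 : ℝ) = 1 := by norm_num
  rw [qSinTerm, he, Real.rpow_one, myAux_poch_mul_eq_prod (q : ℂ) k]
  congr 1
  rw [myAux_D]
  push_cast
  rfl

lemma myAux_geom (r : ℝ) (m : ℕ) :
    1 - r ^ m = (1 - r) * ∑ i ∈ Finset.range m, r ^ i := by
  linear_combination geom_sum_mul r m

lemma myAux_geomC (c : ℂ) (m : ℕ) :
    1 - c ^ m = (1 - c) * ∑ i ∈ Finset.range m, c ^ i := by
  linear_combination geom_sum_mul c m

lemma myAux_frac_eq {r : ℝ} (hr : r ≠ 1) (m : ℕ) :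
    (1 - r) / (1 - r ^ m) = (∑ i ∈ Finset.range m, r ^ i)⁻¹ := by
  have h1 : (1 : ℝ) - r ≠ 0 := sub_ne_zero.mpr (by simpa using hr.symm)
  rw [myAux_geom, ← div_div, div_self h1, one_div]

lemma myAux_frac_le {a b : ℝ} (ha : 0 < a) (hab : a ≤ b) (hb : b < 1) (m : ℕ) :
    (1 - b) / (1 - b ^ m) ≤ (1 - a) / (1 - a ^ m) := by
  have ha1 : a < 1 := lt_of_le_of_lt hab hb
  rw [myAux_frac_eq (ne_of_lt hb), myAux_frac_eq (ne_of_lt ha1)]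
  have hS : (0 : ℝ) < ∑ i ∈ Finset.range m, a ^ i + 1 := by positivity
  have hSa : ∑ i ∈ Finset.range m, a ^ i ≤ ∑ i ∈ Finset.range m, b ^ i :=
    Finset.sum_le_sum fun i _ => pow_le_pow_left₀ ha.le hab i
  rcases Nat.eq_zero_or_pos m with rfl | hm
  · simp
  have hSpos : (0 : ℝ) < ∑ i ∈ Finset.range m, a ^ i := by
    exact Finset.sum_pos (fun i _ => pow_pos ha i) (Finset.nonempty_range_iff.mpr hm.ne')
  exact inv_anti₀ hSpos hSa

lemma myAux_prod_frac (q : ℝ) (k : ℕ) :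
    (1 - q) ^ (2 * k + 1) / myAux_D q k
      = ∏ j ∈ Finset.range (2 * k + 1), (1 - q) / (1 - q ^ (j + 1)) := by
  rw [myAux_D, Finset.prod_div_distrib, Finset.prod_const, Finset.card_range]

/-- lim_{q→1⁻} sin_{-1/2}((1-q)x;q²) = sin x. -/
theorem qSin_tendsto_sin (x : ℂ) :
    Filter.Tendsto (fun q : ℝ => qSin q (-(1 / 2)) (((1 - q : ℝ) : ℂ) * x))
      (nhdsWithin 1 (Set.Ioo 0 1)) (nhds (Complex.sin x)) := by
  -- Choose q₀ close to 1 with (1-q₀)‖x‖ ≤ 1/4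
  obtain ⟨q₀, hq₀0, hq₀lt, hq₀x⟩ :
      ∃ q₀ : ℝ, 0 < q₀ ∧ q₀ < 1 ∧ (1 - q₀) * ‖x‖ ≤ 1 / 4 := by
    refine ⟨max (1/2) (1 - 1/(4*(‖x‖+1))), lt_of_lt_of_le one_half_pos (le_max_left _ _), ?_, ?_⟩
    · apply max_lt (by norm_num)
      have : (0:ℝ) < 1/(4*(‖x‖+1)) := by positivity
      linarith
    · have hM : (0:ℝ) < ‖x‖ + 1 := by positivity
      have h1 : 1 - max (1/2) (1 - 1/(4*(‖x‖+1))) ≤ 1/(4*(‖x‖+1)) := by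
        have := le_max_right (1/2 : ℝ) (1 - 1/(4*(‖x‖+1)))
        linarith
      have h2 : (1 - max (1/2) (1 - 1/(4*(‖x‖+1)))) * ‖x‖ ≤ (1/(4*(‖x‖+1))) * ‖x‖ :=
        mul_le_mul_of_nonneg_right h1 (norm_nonneg x)
      have h3 : (1/(4*(‖x‖+1))) * ‖x‖ ≤ 1/4 := by
        rw [div_mul_eq_mul_div, one_mul, div_le_div_iff₀ (by positivity) (by norm_num)]
        nlinarith [norm_nonneg x]
      linarith
  set B : ℕ → ℝ := fun k => ((1 - q₀) * ‖x‖) ^ (2 * k + 1) / myAux_D q₀ k with hBdef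
  have hq₀sub : (0:ℝ) ≤ 1 - q₀ := by linarith
  have hBnonneg : ∀ k, 0 ≤ B k := by
    intro k
    have := myAux_D_pos hq₀0 hq₀lt k
    have : (0:ℝ) ≤ ((1 - q₀) * ‖x‖) ^ (2 * k + 1) := by positivity
    positivity
  -- Summability of the bound
  have hBsum : Summable B := by
    apply summable_of_ratio_norm_eventually_le (r := 1/4) (by norm_num)
    have hev : ∀ᶠ k : ℕ in Filter.atTop, q₀ ^ k ≤ 1/2 :=
      (tendsto_pow_atTop_nhds_zero_of_lt_one hq₀0.le hq₀lt).eventually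
        (eventually_le_nhds (by norm_num))
    filter_upwards [hev] with k hk
    have hDk := myAux_D_pos hq₀0 hq₀lt k
    have hDk1 := myAux_D_pos hq₀0 hq₀lt (k+1)
    have hp1 : q₀ ^ (2*k+2) ≤ 1/2 :=
      le_trans (pow_le_pow_of_le_one hq₀0.le hq₀lt.le (by omega)) hk
    have hp2 : q₀ ^ (2*k+3) ≤ 1/2 :=
      le_trans (pow_le_pow_of_le_one hq₀0.le hq₀lt.le (by omega)) hk
    have hDsucc : myAux_D q₀ (k+1)
        = myAux_D q₀ k * ((1 - q₀^(2*k+2)) * (1 - q₀^(2*k+3))) := by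
      rw [myAux_D, myAux_D, show 2*(k+1)+1 = (2*k+1)+1+1 from by ring,
        Finset.prod_range_succ, Finset.prod_range_succ]
      ring
    rw [Real.norm_eq_abs, Real.norm_eq_abs, _root_.abs_of_nonneg (hBnonneg _),
      _root_.abs_of_nonneg (hBnonneg _), hBdef]
    simp only
    set u : ℝ := (1 - q₀) * ‖x‖ with hu
    have hu0 : 0 ≤ u := mul_nonneg hq₀sub (norm_nonneg x)
    have hv : (1/4 : ℝ) ≤ (1 - q₀^(2*k+2)) * (1 - q₀^(2*k+3)) := by nlinarith
    have hvpos : (0:ℝ) < (1 - q₀^(2*k+2)) * (1 - q₀^(2*k+3)) := by nlinarith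
    have key : u^2 / ((1 - q₀^(2*k+2)) * (1 - q₀^(2*k+3))) ≤ 1/4 := by
      have hu2 : u^2 ≤ 1/16 := by nlinarith
      have := div_le_div₀ (by norm_num : (0:ℝ) ≤ 1/16) hu2 (by norm_num : (0:ℝ) < 1/4) hv
      calc u^2 / ((1 - q₀^(2*k+2)) * (1 - q₀^(2*k+3))) ≤ (1/16)/(1/4) := this
        _ = 1/4 := by norm_num
    calc u ^ (2*(k+1)+1) / myAux_D q₀ (k+1)
        = (u^(2*k+1) / myAux_D q₀ k) * (u^2 / ((1 - q₀^(2*k+2)) * (1 - q₀^(2*k+3)))) := by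
          rw [hDsucc, show 2*(k+1)+1 = (2*k+1)+2 from by ring, pow_add]
          field_simp
      _ ≤ (u^(2*k+1) / myAux_D q₀ k) * (1/4) :=
          mul_le_mul_of_nonneg_left key (by positivity)
      _ = 1/4 * (u^(2*k+1) / myAux_D q₀ k) := by ring
  -- Pointwise limits
  have hlim : ∀ k : ℕ,
      Filter.Tendsto (fun q : ℝ => qSinTerm q (-(1/2)) (((1 - q : ℝ) : ℂ) * x) k)
        (nhdsWithin 1 (Set.Ioo 0 1))
        (nhds ((-1) ^ k * x ^ (2 * k + 1) / ((2 * k + 1).factorial : ℂ))) := by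
    intro k
    have hc : Filter.Tendsto (fun q : ℝ => (q:ℂ)) (nhdsWithin 1 (Set.Ioo 0 1)) (nhds 1) := by
      simpa using (Complex.continuous_ofReal.tendsto 1).mono_left nhdsWithin_le_nhds
    have hG : Filter.Tendsto (fun q : ℝ => (-1:ℂ)^k * x^(2*k+1) * (q:ℂ)^(k*(k+1)) *
        ∏ j ∈ Finset.range (2*k+1), (∑ i ∈ Finset.range (j+1), (q:ℂ)^i)⁻¹)
        (nhdsWithin 1 (Set.Ioo 0 1))
        (nhds ((-1:ℂ)^k * x^(2*k+1) * 1 * ∏ j ∈ Finset.range (2*k+1), ((j:ℂ)+1)⁻¹)) := by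
      refine (tendsto_const_nhds.mul (by simpa using hc.pow (k*(k+1)))).mul ?_
      refine tendsto_finset_prod _ fun j _ => ?_
      refine Filter.Tendsto.inv₀ ?_ (Nat.cast_add_one_ne_zero j)
      have := tendsto_finset_sum (Finset.range (j+1)) (fun i (_ : i ∈ Finset.range (j+1)) => hc.pow i)
      simpa using this
    have hval : (-1:ℂ)^k * x^(2*k+1) * 1 * ∏ j ∈ Finset.range (2*k+1), ((j:ℂ)+1)⁻¹
        = (-1) ^ k * x ^ (2 * k + 1) / ((2 * k + 1).factorial : ℂ) := by
      rw [Finset.prod_inv_distrib]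
      have hfac : ∏ j ∈ Finset.range (2*k+1), ((j:ℂ)+1) = ((2*k+1).factorial : ℂ) := by
        calc ∏ j ∈ Finset.range (2*k+1), ((j:ℂ)+1)
            = ((∏ j ∈ Finset.range (2*k+1), (j+1) : ℕ) : ℂ) := by push_cast; rfl
          _ = _ := by rw [Finset.prod_range_add_one_eq_factorial]
      rw [hfac, mul_one, div_eq_mul_inv]
    rw [← hval]
    refine Filter.Tendsto.congr' ?_ hG
    filter_upwards [self_mem_nhdsWithin] with q hq
    obtain ⟨hq0, hq1⟩ := hq
    have h1q : (1:ℝ) - q ≠ 0 := ne_of_gt (by linarith)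
    have h1c : (1:ℂ) - (q:ℂ) ≠ 0 := by
      have : ((1 - q : ℝ) : ℂ) ≠ 0 := Complex.ofReal_ne_zero.mpr h1q
      simpa using this
    have hs : ∀ j ∈ Finset.range (2*k+1), (∑ i ∈ Finset.range (j+1), (q:ℂ)^i) ≠ 0 := by
      intro j _
      have hpos : (0:ℝ) < ∑ i ∈ Finset.range (j+1), q^i :=
        Finset.sum_pos (fun i _ => pow_pos hq0 i) ⟨0, Finset.mem_range.mpr (Nat.succ_pos j)⟩
      have hcast : ((∑ i ∈ Finset.range (j+1), q^i : ℝ) : ℂ)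
          = ∑ i ∈ Finset.range (j+1), (q:ℂ)^i := by push_cast; rfl
      rw [← hcast]
      exact Complex.ofReal_ne_zero.mpr hpos.ne'
    have hP : (∏ j ∈ Finset.range (2*k+1), ∑ i ∈ Finset.range (j+1), (q:ℂ)^i) ≠ 0 :=
      Finset.prod_ne_zero_iff.mpr hs
    have hD : ((myAux_D q k : ℝ) : ℂ)
        = (1 - (q:ℂ))^(2*k+1) * ∏ j ∈ Finset.range (2*k+1), ∑ i ∈ Finset.range (j+1), (q:ℂ)^i := by
      have h1 : ((myAux_D q k : ℝ) : ℂ) = ∏ j ∈ Finset.range (2*k+1), (1 - (q:ℂ)^(j+1)) := by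
        rw [myAux_D]; push_cast; rfl
      rw [h1, Finset.prod_congr rfl (fun j _ => myAux_geomC (q:ℂ) (j+1)),
        Finset.prod_mul_distrib, Finset.prod_const, Finset.card_range]
    rw [myAux_qSinTerm_eq, hD, Finset.prod_inv_distrib]
    have hxq : ((1 - q : ℝ) : ℂ) = 1 - (q:ℂ) := by push_cast; ring
    rw [hxq, mul_pow]
    have hpow : ((1:ℂ) - (q:ℂ))^(2*k+1) ≠ 0 := pow_ne_zero _ h1c
    field_simp
  -- Domination
  have hbound : ∀ᶠ q in nhdsWithin (1:ℝ) (Set.Ioo 0 1), ∀ k,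
      ‖qSinTerm q (-(1/2)) (((1 - q : ℝ) : ℂ) * x) k‖ ≤ B k := by
    have hmem : Set.Ioi q₀ ∈ nhdsWithin (1:ℝ) (Set.Ioo 0 1) :=
      nhdsWithin_le_nhds (Ioi_mem_nhds hq₀lt)
    filter_upwards [self_mem_nhdsWithin, hmem] with q hq hq₀q
    obtain ⟨hq0, hq1⟩ := hq
    intro k
    have hDq := myAux_D_pos hq0 hq1 k
    have hnorm : ‖qSinTerm q (-(1/2)) (((1 - q : ℝ) : ℂ) * x) k‖
        = q^(k*(k+1)) * ((1-q)*‖x‖)^(2*k+1) / myAux_D q k := by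
      rw [myAux_qSinTerm_eq]
      simp only [norm_div, norm_mul, norm_pow, norm_neg, norm_one, one_pow, one_mul,
        Complex.norm_real, Real.norm_eq_abs]
      rw [_root_.abs_of_pos hq0, _root_.abs_of_nonneg (by linarith : (0:ℝ) ≤ 1 - q), _root_.abs_of_pos hDq]
    rw [hnorm]
    have hstep1 : q^(k*(k+1)) * ((1-q)*‖x‖)^(2*k+1) / myAux_D q k
        ≤ ((1-q)*‖x‖)^(2*k+1) / myAux_D q k := by
      have hqle : q^(k*(k+1)) ≤ 1 := pow_le_one₀ hq0.le hq1.le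
      gcongr
      nlinarith [pow_nonneg (mul_nonneg (by linarith : (0:ℝ) ≤ 1-q) (norm_nonneg x)) (2*k+1)]
    refine hstep1.trans ?_
    have hEq : ((1-q)*‖x‖)^(2*k+1) / myAux_D q k
        = ‖x‖^(2*k+1) * ∏ j ∈ Finset.range (2*k+1), (1-q)/(1-q^(j+1)) := by
      rw [← myAux_prod_frac, mul_pow]
      ring
    have hBq : B k = ‖x‖^(2*k+1) * ∏ j ∈ Finset.range (2*k+1), (1-q₀)/(1-q₀^(j+1)) := by
      rw [hBdef]
      simp only
      rw [← myAux_prod_frac, mul_pow]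
      ring
    rw [hEq, hBq]
    apply mul_le_mul_of_nonneg_left ?_ (by positivity)
    apply Finset.prod_le_prod
    · intro j _
      have : q^(j+1) < 1 := pow_lt_one₀ hq0.le hq1 (Nat.succ_ne_zero j)
      apply div_nonneg (by linarith) (by linarith)
    · intro j _
      exact myAux_frac_le hq₀0 (le_of_lt hq₀q) hq1 (j+1)
  -- Conclude
  have hsin := (Complex.hasSum_sin x).tsum_eq
  simp only [qSin]
  rw [← hsin]
  exact tendsto_tsum_of_dominated_convergence hBsum hlim hbound
end
end

section
/- Let x∈ℂ be fixed. Then as q tends to 1 from below, e_{-1/2}((1-q)x;q²) tends to e^x, where e_{-1/2}(y;q²) = cos_{-1/2}(-iy;q²) + i·sin_{-1/2}(-iy;q²). -/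
noncomputable section

open Complex Filter Topology

namespace QExpAux

open scoped Nat

/-- Geometric sum `1 + q + ⋯ + q^(m-1)`. -/
def G (q : ℝ) (m : ℕ) : ℝ := ∑ i ∈ Finset.range m, q ^ i

/-- `P q n = ∏_{m=1}^{n} G q m`. -/
def P (q : ℝ) (n : ℕ) : ℝ := ∏ m ∈ Finset.range n, G q (m + 1)

lemma G_pos {q : ℝ} (hq : 0 < q) (m : ℕ) : 0 < G q (m + 1) :=
  Finset.sum_pos (fun i _ => pow_pos hq i) (by simp)

lemma P_pos {q : ℝ} (hq : 0 < q) (n : ℕ) : 0 < P q n :=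
  Finset.prod_pos fun m _ => G_pos hq m

lemma prod_cast_factorial (n : ℕ) :
    ∏ m ∈ Finset.range n, ((m : ℝ) + 1) = (n ! : ℝ) := by
  rw [← Finset.prod_range_add_one_eq_factorial]
  push_cast
  rfl

lemma P_one (n : ℕ) : P 1 n = (n ! : ℝ) := by
  rw [P, ← prod_cast_factorial]
  refine Finset.prod_congr rfl fun m _ => ?_
  simp [G]

lemma sq_geom_bound {q : ℝ} (hq : 0 ≤ q) (m : ℕ) :
    ((m : ℝ) + 1) ^ 2 * q ^ m ≤ G q (m + 1) ^ 2 := by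
  set r := Real.sqrt q with hr
  have hr2 : r ^ 2 = q := Real.sq_sqrt hq
  have key := Finset.sum_mul_sq_le_sq_mul_sq (Finset.range (m + 1))
      (fun i => r ^ i) (fun i => r ^ (m - i))
  have hterm : ∀ i ∈ Finset.range (m + 1), r ^ i * r ^ (m - i) = r ^ m := by
    intro i hi
    rw [← pow_add]
    congr 1
    have := Finset.mem_range.mp hi
    omega
  have h1 : ∑ i ∈ Finset.range (m + 1), r ^ i * r ^ (m - i) = ((m : ℝ) + 1) * r ^ m := by
    rw [Finset.sum_congr rfl hterm, Finset.sum_const, Finset.card_range, nsmul_eq_mul]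
    push_cast
    ring
  have hsq : ∀ i : ℕ, (r ^ i) ^ 2 = q ^ i := fun i => by
    rw [← pow_mul, mul_comm, pow_mul, hr2]
  have h2 : ∑ i ∈ Finset.range (m + 1), ((fun i => r ^ i) i) ^ 2 = G q (m + 1) := by
    simp only [hsq]; rfl
  have h3 : ∑ i ∈ Finset.range (m + 1), ((fun i => r ^ (m - i)) i) ^ 2 = G q (m + 1) := by
    simp only [hsq]
    have := Finset.sum_range_reflect (fun i => q ^ i) (m + 1)
    simp only [Nat.add_sub_cancel] at this
    rw [this]
    rfl
  rw [h1, h2, h3] at key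
  calc ((m : ℝ) + 1) ^ 2 * q ^ m = (((m : ℝ) + 1) * r ^ m) ^ 2 := by
        rw [mul_pow, hsq]
    _ ≤ G q (m + 1) * G q (m + 1) := key
    _ = G q (m + 1) ^ 2 := (sq _).symm

lemma factorial_mul_pow_le {q : ℝ} (hq0 : 0 < q) (hq1 : q ≤ 1) {n e : ℕ}
    (h : ∑ m ∈ Finset.range n, m ≤ 2 * e) :
    (n ! : ℝ) * q ^ e ≤ P q n := by
  have hP := P_pos hq0 n
  have hL : (0 : ℝ) ≤ (n ! : ℝ) * q ^ e := by positivity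
  rw [← pow_le_pow_iff_left₀ hL hP.le (two_ne_zero)]
  calc ((n ! : ℝ) * q ^ e) ^ 2 = (n ! : ℝ) ^ 2 * q ^ (2 * e) := by
        rw [mul_pow, ← pow_mul, mul_comm e 2]
    _ ≤ (n ! : ℝ) ^ 2 * q ^ (∑ m ∈ Finset.range n, m) := by
        exact mul_le_mul_of_nonneg_left (pow_le_pow_of_le_one hq0.le hq1 h) (by positivity)
    _ = ∏ m ∈ Finset.range n, (((m : ℝ) + 1) ^ 2 * q ^ m) := by
        rw [Finset.prod_mul_distrib, Finset.prod_pow_eq_pow_sum, Finset.prod_pow,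
          prod_cast_factorial]
    _ ≤ ∏ m ∈ Finset.range n, (G q (m + 1)) ^ 2 :=
        Finset.prod_le_prod (fun m _ => by positivity) (fun m _ => sq_geom_bound hq0.le m)
    _ = (P q n) ^ 2 := by rw [P, Finset.prod_pow]

lemma coef_nonneg {q : ℝ} (hq0 : 0 < q) (e n : ℕ) : 0 ≤ q ^ e / P q n :=
  div_nonneg (by positivity) (P_pos hq0 n).le

lemma coef_le {q : ℝ} (hq0 : 0 < q) (hq1 : q ≤ 1) {n e : ℕ}
    (h : ∑ m ∈ Finset.range n, m ≤ 2 * e) :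
    q ^ e / P q n ≤ 1 / (n ! : ℝ) := by
  rw [div_le_div_iff₀ (P_pos hq0 n) (by positivity)]
  calc q ^ e * (n ! : ℝ) = (n ! : ℝ) * q ^ e := by ring
    _ ≤ P q n := factorial_mul_pow_le hq0 hq1 h
    _ = 1 * P q n := (one_mul _).symm

lemma one_sub_pow (q : ℝ) (m : ℕ) : 1 - q ^ (m + 1) = (1 - q) * G q (m + 1) := by
  have h := geom_sum_mul q (m + 1)
  unfold G
  linear_combination h

lemma prod_one_sub (q : ℝ) (n : ℕ) :
    ∏ m ∈ Finset.range n, (1 - q ^ (m + 1)) = (1 - q) ^ n * P q n := by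
  calc ∏ m ∈ Finset.range n, (1 - q ^ (m + 1))
      = ∏ m ∈ Finset.range n, ((1 - q) * G q (m + 1)) :=
        Finset.prod_congr rfl fun m _ => one_sub_pow q m
    _ = (1 - q) ^ n * P q n := by
        rw [Finset.prod_mul_distrib, Finset.prod_const, Finset.card_range, P]

lemma qPochR_succ (a b : ℝ) (k : ℕ) : qPochR a b (k + 1) = qPochR a b k * (1 - a * b ^ k) := by
  rw [qPochR, qPochR, Finset.prod_range_succ]

lemma pochR_even (q : ℝ) (k : ℕ) :
    qPochR q (q ^ 2) k * qPochR (q ^ 2) (q ^ 2) k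
      = ∏ m ∈ Finset.range (2 * k), (1 - q ^ (m + 1)) := by
  induction k with
  | zero => simp [qPochR]
  | succ k ih =>
      have h2 : 2 * (k + 1) = (2 * k) + 1 + 1 := by ring
      rw [qPochR_succ, qPochR_succ, h2, Finset.prod_range_succ, Finset.prod_range_succ, ← ih]
      have e1 : q * (q ^ 2) ^ k = q ^ (2 * k + 1) := by
        rw [← pow_mul]; ring
      have e2 : q ^ 2 * (q ^ 2) ^ k = q ^ (2 * k + 1 + 1) := by
        rw [← pow_mul]; ring
      rw [e1, e2]
      ring

lemma pochR_odd (q : ℝ) (k : ℕ) :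
    qPochR q (q ^ 2) (k + 1) * qPochR (q ^ 2) (q ^ 2) k
      = ∏ m ∈ Finset.range (2 * k + 1), (1 - q ^ (m + 1)) := by
  rw [qPochR_succ, Finset.prod_range_succ, ← pochR_even]
  have e1 : q * (q ^ 2) ^ k = q ^ (2 * k + 1) := by rw [← pow_mul]; ring
  rw [e1]
  ring

lemma qPoch_cast (a b : ℝ) (k : ℕ) : qPoch (a : ℂ) (b : ℂ) k = ((qPochR a b k : ℝ) : ℂ) := by
  rw [qPoch, qPochR]
  push_cast
  rfl


lemma cos_term_eq {q : ℝ} (hq : q ∈ Set.Ioo (0:ℝ) 1) (x : ℂ) (k : ℕ) :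
    qCosTerm q (-(1/2)) (-Complex.I * (((1 - q : ℝ) : ℂ) * x)) k
      = ((q ^ (k * (k + 1)) / P q (2 * k) : ℝ) : ℂ) * x ^ (2 * k) := by
  obtain ⟨hq0, hq1⟩ := hq
  have hsub : (0:ℝ) < 1 - q := by linarith
  have hPpos := P_pos hq0 (2 * k)
  have hexp1 : (2 * (-(1/2:ℝ)) + 2 : ℝ) = 1 := by norm_num
  have hc2 : ((q : ℂ)) ^ 2 = ((q ^ 2 : ℝ) : ℂ) := by push_cast; ring
  have hIpow : (-Complex.I * (((1 - q : ℝ) : ℂ) * x)) ^ (2 * k)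
      = (-1 : ℂ) ^ k * (((1 - q : ℝ) : ℂ) ^ (2 * k) * x ^ (2 * k)) := by
    rw [mul_pow, mul_pow, pow_mul, neg_sq, Complex.I_sq]
  rw [qCosTerm, hexp1, Real.rpow_one, hc2, qPoch_cast, qPoch_cast, ← Complex.ofReal_mul,
    pochR_even, prod_one_sub, hIpow]
  push_cast
  have hneg : (-1 : ℂ) ^ k * (-1 : ℂ) ^ k = 1 := by rw [← mul_pow]; norm_num
  have h1' : (1 - (q:ℂ)) ^ (2 * k) ≠ 0 := by
    apply pow_ne_zero
    have : ((1 - q : ℝ) : ℂ) ≠ 0 := by exact_mod_cast hsub.ne'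
    simpa using this
  rw [show (-1:ℂ) ^ k * (q:ℂ) ^ (k * (k+1)) * ((-1:ℂ) ^ k * ((1 - (q:ℂ)) ^ (2*k) * x ^ (2*k)))
      = (1 - (q:ℂ)) ^ (2*k) * ((q:ℂ) ^ (k * (k+1)) * x ^ (2*k)) from by
        linear_combination ((1 - (q:ℂ)) ^ (2*k) * ((q:ℂ) ^ (k * (k+1)) * x ^ (2*k))) * hneg,
    mul_div_mul_left _ _ h1']
  ring

lemma sin_term_eq {q : ℝ} (hq : q ∈ Set.Ioo (0:ℝ) 1) (x : ℂ) (k : ℕ) :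
    qSinTerm q (-(1/2)) (-Complex.I * (((1 - q : ℝ) : ℂ) * x)) k
      = -Complex.I * (((q ^ (k * (k + 1)) / P q (2 * k + 1) : ℝ) : ℂ) * x ^ (2 * k + 1)) := by
  obtain ⟨hq0, hq1⟩ := hq
  have hsub : (0:ℝ) < 1 - q := by linarith
  have hPpos := P_pos hq0 (2 * k + 1)
  have hexp1 : (2 * (-(1/2:ℝ)) + 2 : ℝ) = 1 := by norm_num
  have hc2 : ((q : ℂ)) ^ 2 = ((q ^ 2 : ℝ) : ℂ) := by push_cast; ring
  have hIpow : (-Complex.I * (((1 - q : ℝ) : ℂ) * x)) ^ (2 * k + 1)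
      = (-1 : ℂ) ^ k * -Complex.I * (((1 - q : ℝ) : ℂ) ^ (2 * k + 1) * x ^ (2 * k + 1)) := by
    rw [mul_pow, pow_succ ((-Complex.I)) (2 * k), pow_mul, neg_sq, Complex.I_sq, mul_pow]
  rw [qSinTerm, hexp1, Real.rpow_one, hc2, qPoch_cast, qPoch_cast, ← Complex.ofReal_mul,
    pochR_odd, prod_one_sub, hIpow]
  push_cast
  have hneg : (-1 : ℂ) ^ k * (-1 : ℂ) ^ k = 1 := by rw [← mul_pow]; norm_num
  have h1' : (1 - (q:ℂ)) ^ (2 * k + 1) ≠ 0 := by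
    apply pow_ne_zero
    have : ((1 - q : ℝ) : ℂ) ≠ 0 := by exact_mod_cast hsub.ne'
    simpa using this
  rw [show (-1:ℂ) ^ k * (q:ℂ) ^ (k * (k+1)) *
        ((-1:ℂ) ^ k * -Complex.I * ((1 - (q:ℂ)) ^ (2*k+1) * x ^ (2*k+1)))
      = (1 - (q:ℂ)) ^ (2*k+1) * (-Complex.I * ((q:ℂ) ^ (k * (k+1)) * x ^ (2*k+1))) from by
        linear_combination ((1 - (q:ℂ)) ^ (2*k+1) * (-Complex.I *
          ((q:ℂ) ^ (k * (k+1)) * x ^ (2*k+1)))) * hneg,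
    mul_div_mul_left _ _ h1']
  ring

lemma coef_tendsto (e n : ℕ) :
    Filter.Tendsto (fun q : ℝ => ((q ^ e / P q n : ℝ) : ℂ))
      (nhdsWithin 1 (Set.Ioo 0 1)) (nhds (((1 / (n ! : ℝ) : ℝ) : ℂ))) := by
  have hG : ∀ m : ℕ, Continuous fun q : ℝ => G q m := fun m => by
    unfold G; exact continuous_finset_sum _ fun i _ => continuous_pow i
  have hP : Continuous fun q : ℝ => P q n := by
    unfold P; exact continuous_finset_prod _ fun m _ => hG (m + 1)
  have hPne : P 1 n ≠ 0 := by
    rw [P_one]; positivity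
  have h : Filter.Tendsto (fun q : ℝ => q ^ e / P q n) (nhds 1) (nhds (1 / (n ! : ℝ))) := by
    have := ((continuous_pow e).continuousAt (x := (1:ℝ))).div hP.continuousAt hPne
    simpa [ContinuousAt, one_pow, P_one, Pi.div_def] using this
  exact (Complex.continuous_ofReal.tendsto _).comp (h.mono_left nhdsWithin_le_nhds)

lemma cond_even' (k : ℕ) : ∑ m ∈ Finset.range (2 * k), m ≤ 2 * (k * k) := by
  induction k with
  | zero => simp
  | succ k ih =>
      have h2 : 2 * (k + 1) = 2 * k + 1 + 1 := by ring
      rw [h2, Finset.sum_range_succ, Finset.sum_range_succ]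
      nlinarith [ih]

lemma cond_even (k : ℕ) : ∑ m ∈ Finset.range (2 * k), m ≤ 2 * (k * (k + 1)) := by
  nlinarith [cond_even' k]

lemma cond_odd (k : ℕ) : ∑ m ∈ Finset.range (2 * k + 1), m ≤ 2 * (k * (k + 1)) := by
  rw [Finset.sum_range_succ]
  nlinarith [cond_even' k]

lemma summable_even (c : ℝ) : Summable (fun k : ℕ => c ^ (2 * k) / ((2 * k)! : ℝ)) :=
  (Real.summable_pow_div_factorial c).comp_injective (fun a b h => by omega)

lemma summable_odd (c : ℝ) : Summable (fun k : ℕ => c ^ (2 * k + 1) / ((2 * k + 1)! : ℝ)) :=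
  (Real.summable_pow_div_factorial c).comp_injective (fun a b h => by omega)

end QExpAux


set_option maxHeartbeats 1000000 in
/-- lim_{q→1⁻} e_{-1/2}((1-q)x;q²) = eˣ. -/
theorem qExp_tendsto_exp (x : ℂ) :
    Filter.Tendsto (fun q : ℝ => qExp q (-(1 / 2)) (((1 - q : ℝ) : ℂ) * x))
      (nhdsWithin 1 (Set.Ioo 0 1)) (nhds (Complex.exp x)) := by
  classical
  simp only [qExp]
  have hmem : ∀ᶠ q in nhdsWithin (1:ℝ) (Set.Ioo 0 1), q ∈ Set.Ioo (0:ℝ) 1 :=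
    eventually_mem_nhdsWithin
  have hbe : Summable (fun k : ℕ => ‖x‖ ^ (2 * k) / (((2 * k).factorial : ℝ))) :=
    QExpAux.summable_even ‖x‖
  have hbo : Summable (fun k : ℕ => ‖x‖ ^ (2 * k + 1) / (((2 * k + 1).factorial : ℝ))) :=
    QExpAux.summable_odd ‖x‖
  have T1 : Filter.Tendsto
      (fun q : ℝ => qCos q (-(1/2)) (-Complex.I * (((1 - q : ℝ) : ℂ) * x)))
      (nhdsWithin 1 (Set.Ioo 0 1))
      (nhds (∑' k : ℕ, ((1 / (((2 * k).factorial : ℝ)) : ℝ) : ℂ) * x ^ (2 * k))) := by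
    simp only [qCos]
    apply tendsto_tsum_of_dominated_convergence hbe
    · intro k
      refine Filter.Tendsto.congr' ?_
        ((QExpAux.coef_tendsto (k * (k + 1)) (2 * k)).mul_const (x ^ (2 * k)))
      filter_upwards [hmem] with q hq
      exact (QExpAux.cos_term_eq hq x k).symm
    · filter_upwards [hmem] with q hq
      intro k
      rw [QExpAux.cos_term_eq hq x k]
      have h0 := QExpAux.coef_nonneg hq.1 (k * (k + 1)) (2 * k)
      have h1 := QExpAux.coef_le hq.1 hq.2.le (QExpAux.cond_even k)
      calc ‖((q ^ (k * (k + 1)) / QExpAux.P q (2 * k) : ℝ) : ℂ) * x ^ (2 * k)‖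
          = (q ^ (k * (k + 1)) / QExpAux.P q (2 * k)) * ‖x‖ ^ (2 * k) := by
            rw [norm_mul, norm_pow, Complex.norm_real, Real.norm_of_nonneg h0]
        _ ≤ (1 / (((2 * k).factorial : ℝ))) * ‖x‖ ^ (2 * k) :=
            mul_le_mul_of_nonneg_right h1 (by positivity)
        _ = ‖x‖ ^ (2 * k) / (((2 * k).factorial : ℝ)) := by ring
  have T2 : Filter.Tendsto
      (fun q : ℝ => qSin q (-(1/2)) (-Complex.I * (((1 - q : ℝ) : ℂ) * x)))
      (nhdsWithin 1 (Set.Ioo 0 1))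
      (nhds (∑' k : ℕ,
        -Complex.I * (((1 / (((2 * k + 1).factorial : ℝ)) : ℝ) : ℂ) * x ^ (2 * k + 1)))) := by
    simp only [qSin]
    apply tendsto_tsum_of_dominated_convergence hbo
    · intro k
      refine Filter.Tendsto.congr' ?_
        ((((QExpAux.coef_tendsto (k * (k + 1)) (2 * k + 1)).mul_const
          (x ^ (2 * k + 1))).const_mul (-Complex.I)))
      filter_upwards [hmem] with q hq
      exact (QExpAux.sin_term_eq hq x k).symm
    · filter_upwards [hmem] with q hq
      intro k
      rw [QExpAux.sin_term_eq hq x k]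
      have h0 := QExpAux.coef_nonneg hq.1 (k * (k + 1)) (2 * k + 1)
      have h1 := QExpAux.coef_le hq.1 hq.2.le (QExpAux.cond_odd k)
      calc ‖-Complex.I *
            (((q ^ (k * (k + 1)) / QExpAux.P q (2 * k + 1) : ℝ) : ℂ) * x ^ (2 * k + 1))‖
          = (q ^ (k * (k + 1)) / QExpAux.P q (2 * k + 1)) * ‖x‖ ^ (2 * k + 1) := by
            rw [norm_mul, norm_neg, Complex.norm_I, one_mul, norm_mul, norm_pow,
              Complex.norm_real, Real.norm_of_nonneg h0]
        _ ≤ (1 / (((2 * k + 1).factorial : ℝ))) * ‖x‖ ^ (2 * k + 1) :=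
            mul_le_mul_of_nonneg_right h1 (by positivity)
        _ = ‖x‖ ^ (2 * k + 1) / (((2 * k + 1).factorial : ℝ)) := by ring
  have hse : Summable fun k : ℕ => x ^ (2 * k) / (((2 * k).factorial : ℕ) : ℂ) := by
    apply Summable.of_norm
    simp only [norm_div, norm_pow, Complex.norm_natCast]
    exact hbe
  have hso : Summable fun k : ℕ => x ^ (2 * k + 1) / (((2 * k + 1).factorial : ℕ) : ℂ) := by
    apply Summable.of_norm
    simp only [norm_div, norm_pow, Complex.norm_natCast]
    exact hbo
  have hval : (∑' k : ℕ, ((1 / (((2 * k).factorial : ℝ)) : ℝ) : ℂ) * x ^ (2 * k))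
      + Complex.I * (∑' k : ℕ,
        -Complex.I * (((1 / (((2 * k + 1).factorial : ℝ)) : ℝ) : ℂ) * x ^ (2 * k + 1)))
      = Complex.exp x := by
    have e1 : (∑' k : ℕ, ((1 / (((2 * k).factorial : ℝ)) : ℝ) : ℂ) * x ^ (2 * k))
        = ∑' k : ℕ, x ^ (2 * k) / (((2 * k).factorial : ℕ) : ℂ) := by
      refine tsum_congr fun k => ?_
      push_cast
      ring
    have e2 : Complex.I * (∑' k : ℕ,
          -Complex.I * (((1 / (((2 * k + 1).factorial : ℝ)) : ℝ) : ℂ) * x ^ (2 * k + 1)))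
        = ∑' k : ℕ, x ^ (2 * k + 1) / (((2 * k + 1).factorial : ℕ) : ℂ) := by
      rw [← tsum_mul_left]
      refine tsum_congr fun k => ?_
      have hI : Complex.I * -Complex.I = 1 := by
        simp [Complex.I_mul_I]
      rw [← mul_assoc, hI, one_mul]
      push_cast
      ring
    have hexp : Complex.exp x = ∑' n : ℕ, x ^ n / (n.factorial : ℂ) := by
      rw [Complex.exp_eq_exp_ℂ, NormedSpace.exp_eq_tsum_div]
    rw [e1, e2, hexp]
    exact tsum_even_add_odd (f := fun n : ℕ => x ^ n / (n.factorial : ℂ)) hse hso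
  have Ttot := T1.add (T2.const_mul Complex.I)
  rw [hval] at Ttot
  exact Ttot
end
end
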